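/- Let (W, μ) be a probability space, 𝓕 a sub-σ-algebra, ξ, η ℕ-valued random variables with η being 𝓕-measurable, ϑ₀ > 0, C₀ ≥ 1, and suppose μ(ξ − η ≥ q | 𝓕) ≤ C₀ e^{−q ϑ₀} for all q ≥ 1 and ξ ≥ η a.s. Then for any Q ≥ 1, E(exp((ϑ₀/2) 𝟙_Q(ξ − η)) | 𝓕) ≤ (1 − e^{−ϑ₀/2} + C₀ e^{−Q ϑ₀/2})/(1 − e^{−ϑ₀/2}) almost surely, where 𝟙_Q(q) = q if q ≥ Q and 0 otherwise. -/

import Mathlib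

open MeasureTheory Filter Topology

/-- Truncation `𝟙_Q` on `ℕ`: `𝟙_Q(q) = q` if `q ≥ Q`, else `0`. -/
def truncQ (Q q : ℕ) : ℕ := if Q ≤ q then q else 0

private lemma truncQ_mono (Q : ℕ) {n m : ℕ} (h : n ≤ m) : truncQ Q n ≤ truncQ Q m := by
  unfold truncQ; split <;> split <;> omega

/-- One-step conditional exponential moment bound used in the large deviation lemma. -/
theorem stmt_1
    {W : Type*} [m0 : MeasurableSpace W] (μ : Measure W) [IsProbabilityMeasure μ]
    (𝓕 : MeasurableSpace W) (hle : 𝓕 ≤ m0)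
    (ξ η : W → ℕ) (hη : Measurable[𝓕] η)
    (ϑ₀ C₀ : ℝ) (hϑ₀ : 0 < ϑ₀) (hC₀ : 1 ≤ C₀)
    (hmono : ∀ᵐ w ∂μ, η w ≤ ξ w)
    (hcond : ∀ q : ℕ, 1 ≤ q →
      ∀ᵐ w ∂μ,
        (μ[Set.indicator {w | η w + q ≤ ξ w} (fun _ => (1 : ℝ)) | 𝓕]) w
          ≤ C₀ * Real.exp (-(q : ℝ) * ϑ₀)) :
    ∀ Q : ℕ, 1 ≤ Q →
      ∀ᵐ w ∂μ,
        (μ[fun w => Real.exp ((ϑ₀ / 2) * (truncQ Q (ξ w - η w) : ℝ)) | 𝓕]) w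
          ≤ (1 - Real.exp (-ϑ₀ / 2) + C₀ * Real.exp (-(Q : ℝ) * ϑ₀ / 2)) /
              (1 - Real.exp (-ϑ₀ / 2)) := by
  intro Q hQ
  set θ : ℝ := ϑ₀ / 2 with hθ
  have hθpos : 0 < θ := by positivity
  set r : ℝ := Real.exp (-θ) with hr
  have hr0 : 0 < r := Real.exp_pos _
  have hr1 : r < 1 := by
    rw [hr, ← Real.exp_zero]
    exact Real.exp_lt_exp.2 (by linarith)
  have hden : 0 < 1 - r := by linarith
  set c : ℝ := 1 + C₀ * r ^ Q / (1 - r) with hc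
  have e1 : Real.exp (-ϑ₀ / 2) = r := by rw [hr]; congr 1; rw [hθ]; ring
  have e2 : Real.exp (-(Q : ℝ) * ϑ₀ / 2) = r ^ Q := by
    rw [hr, ← Real.exp_nat_mul]; congr 1; rw [hθ]; ring
  have hRHS : (1 - Real.exp (-ϑ₀ / 2) + C₀ * Real.exp (-(Q : ℝ) * ϑ₀ / 2)) /
      (1 - Real.exp (-ϑ₀ / 2)) = c := by
    rw [e1, e2, hc]
    field_simp
  rw [hRHS]
  set F : W → ℝ := fun w => Real.exp (θ * (truncQ Q (ξ w - η w) : ℝ)) with hF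
  by_cases hint : Integrable F μ
  swap
  · rw [condExp_of_not_integrable hint]
    refine Filter.Eventually.of_forall fun w => ?_
    have h1 : (0:ℝ) ≤ C₀ * r ^ Q / (1 - r) := by positivity
    have : (0 : ℝ) ≤ c := by rw [hc]; linarith
    simpa using this
  -- main case
  set f : ℕ → ℝ := fun n => Real.exp (θ * (truncQ Q n : ℝ)) with hf
  set a : ℕ → ℝ := fun q => f q - f (q - 1) with ha
  set g : ℕ → W → ℝ := fun q => Set.indicator {w | η w + q ≤ ξ w} (fun _ => (1 : ℝ)) with hg
  have hf0 : f 0 = 1 := by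
    have h0 : truncQ Q 0 = 0 := by unfold truncQ; split <;> rfl
    simp [hf, h0]
  have hfpos : ∀ n, 0 < f n := fun n => Real.exp_pos _
  have hfmono : Monotone f := fun n m h =>
    Real.exp_le_exp.2 (mul_le_mul_of_nonneg_left (Nat.cast_le.2 (truncQ_mono Q h)) hθpos.le)
  have ha_nonneg : ∀ q, 0 ≤ a q := fun q => sub_nonneg.2 (hfmono (Nat.sub_le q 1))
  have ha_zero : ∀ q, q < Q → a q = 0 := by
    intro q hq
    have h1 : truncQ Q q = 0 := by unfold truncQ; split <;> omega
    have h2 : truncQ Q (q - 1) = 0 := by unfold truncQ; split <;> omega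
    simp [ha, hf, h1, h2]
  have ha_le : ∀ q, Q ≤ q → a q ≤ Real.exp (θ * q) := by
    intro q hq
    have h1 : truncQ Q q = q := by unfold truncQ; split <;> omega
    have h2 : 0 < f (q - 1) := hfpos _
    have h3 : a q ≤ f q := by rw [ha]; dsimp only; linarith
    calc a q ≤ f q := h3
    _ = Real.exp (θ * q) := by rw [hf]; dsimp only; rw [h1]
  have telescope : ∀ n, 1 + ∑ q ∈ Finset.Icc 1 n, a q = f n := by
    intro n
    induction n with
    | zero => simp [hf0]
    | succ n ih =>
      rw [Finset.sum_Icc_succ_top (by omega : 1 ≤ n + 1)]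
      have h4 : a (n + 1) = f (n + 1) - f n := by simp [ha]
      rw [← add_assoc, ih, h4]; ring
  set S : ℕ → W → ℝ := fun N w => 1 + ∑ q ∈ Finset.Icc 1 N, a q * g q w with hS
  have hg_eval : ∀ q w, η w ≤ ξ w → g q w = if q ≤ ξ w - η w then (1 : ℝ) else 0 := by
    intro q w hw
    simp only [hg, Set.indicator_apply, Set.mem_setOf_eq]
    by_cases h : η w + q ≤ ξ w
    · rw [if_pos h, if_pos (by omega)]
    · rw [if_neg h, if_neg (by omega)]
  have hS_eval : ∀ w, η w ≤ ξ w → ∀ N, S N w = f (min (ξ w - η w) N) := by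
    intro w hw N
    have key : ∑ q ∈ Finset.Icc 1 N, a q * g q w
        = ∑ q ∈ Finset.Icc 1 (min (ξ w - η w) N), a q := by
      rw [show (Finset.Icc 1 (min (ξ w - η w) N))
          = (Finset.Icc 1 N).filter (fun q => q ≤ ξ w - η w) from by
        ext q; simp only [Finset.mem_filter, Finset.mem_Icc]; omega]
      rw [Finset.sum_filter]
      refine Finset.sum_congr rfl fun q _ => ?_
      rw [hg_eval q w hw]
      split <;> simp
    rw [hS]; dsimp only; rw [key, telescope]
  -- a.e. measurability / integrability of the indicators, for q ≥ Q
  obtain ⟨F', hF'm, hFF'⟩ := hint.1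
  have hg_int : ∀ q, Q ≤ q → Integrable (g q) μ := by
    intro q hQq
    have hmeas : AEStronglyMeasurable[m0] (g q) μ := by
      have hset : MeasurableSet[m0] {w | Real.exp (θ * q) ≤ F' w} :=
        measurableSet_le measurable_const hF'm.measurable
      have hsm : StronglyMeasurable[m0]
          (Set.indicator {w | Real.exp (θ * q) ≤ F' w} (fun _ => (1 : ℝ))) :=
        stronglyMeasurable_const.indicator hset
      refine hsm.aestronglyMeasurable.congr ?_
      filter_upwards [hmono, hFF'] with w hw hFw
      have hkey : Real.exp (θ * q) ≤ F w ↔ q ≤ ξ w - η w := by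
        have h1 : Real.exp (θ * q) ≤ F w ↔ (q : ℝ) ≤ (truncQ Q (ξ w - η w) : ℝ) := by
          rw [hF]; dsimp only; rw [Real.exp_le_exp]
          constructor
          · intro h; exact le_of_mul_le_mul_left h hθpos
          · intro h; exact mul_le_mul_of_nonneg_left h hθpos.le
        rw [h1, Nat.cast_le]
        unfold truncQ; split <;> omega
      have h2 : (η w + q ≤ ξ w) ↔ q ≤ ξ w - η w := by omega
      rw [hFw] at hkey
      simp only [hg, Set.indicator_apply, Set.mem_setOf_eq]
      by_cases h : q ≤ ξ w - η w
      · rw [if_pos (hkey.2 h), if_pos (h2.2 h)]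
      · rw [if_neg (fun hh => h (hkey.1 hh)), if_neg (fun hh => h (h2.1 hh))]
    refine Integrable.mono' (integrable_const (1 : ℝ)) hmeas ?_
    refine Filter.Eventually.of_forall fun w => ?_
    simp only [hg, Set.indicator_apply]
    split <;> simp
  haveI : IsFiniteMeasure (μ.trim hle) := isFiniteMeasure_trim hle
  -- geometric series bound
  set b : ℕ → ℝ := fun q => if Q ≤ q then C₀ * r ^ q else 0 with hb
  have hC₀0 : (0:ℝ) < C₀ := by linarith
  have hb_nonneg : ∀ q, 0 ≤ b q := by
    intro q; rw [hb]; dsimp only; split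
    · positivity
    · exact le_rfl
  have hb_summable : Summable b := by
    refine Summable.of_nonneg_of_le hb_nonneg (fun q => ?_)
      ((summable_geometric_of_lt_one hr0.le hr1).mul_left C₀)
    rw [hb]; dsimp only; split
    · exact le_rfl
    · positivity
  have hb_tsum : ∑' q, b q = C₀ * r ^ Q / (1 - r) := by
    rw [← hb_summable.sum_add_tsum_nat_add Q]
    have hz : ∑ i ∈ Finset.range Q, b i = 0 := by
      refine Finset.sum_eq_zero fun i hi => ?_
      rw [hb]; dsimp only
      rw [if_neg (by simp at hi; omega)]
    have hshift : ∀ i : ℕ, b (i + Q) = (C₀ * r ^ Q) * r ^ i := by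
      intro i
      rw [hb]; dsimp only
      rw [if_pos (by omega), pow_add]; ring
    rw [hz, zero_add]
    simp_rw [hshift]
    rw [tsum_mul_left, tsum_geometric_of_lt_one hr0.le hr1]
    ring
  have hb_sum_le : ∀ N, ∑ q ∈ Finset.Icc 1 N, b q ≤ C₀ * r ^ Q / (1 - r) := by
    intro N
    rw [← hb_tsum]
    exact hb_summable.sum_le_tsum _ (fun i _ => hb_nonneg i)
  -- bound on set integrals of F
  have hkey : ∀ s, MeasurableSet[𝓕] s → ∫ w in s, F w ∂μ ≤ (μ s).toReal * c := by
    intro s hs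
    have hq_int : ∀ q, Integrable (fun w => a q * g q w) (μ.restrict s) := by
      intro q
      by_cases hQq : Q ≤ q
      · exact ((hg_int q hQq).restrict).const_mul _
      · have hz : a q = 0 := ha_zero q (by omega)
        simp only [hz, zero_mul]
        exact integrable_zero _ _ _
    have hSint : ∀ N, Integrable (S N) (μ.restrict s) :=
      fun N => (integrable_const 1).add (integrable_finset_sum _ fun q _ => hq_int q)
    have hFint : Integrable F (μ.restrict s) := hint.restrict
    have h_mono : ∀ᵐ w ∂μ.restrict s, Monotone fun N => S N w := by
      refine ae_restrict_of_ae (hmono.mono fun w hw => ?_)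
      intro N M h
      dsimp only
      rw [hS_eval w hw, hS_eval w hw]
      exact hfmono (min_le_min le_rfl h)
    have h_tend : ∀ᵐ w ∂μ.restrict s, Tendsto (fun N => S N w) atTop (𝓝 (F w)) := by
      refine ae_restrict_of_ae (hmono.mono fun w hw => ?_)
      refine tendsto_atTop_of_eventually_const (i₀ := ξ w - η w) fun N hN => ?_
      rw [hS_eval w hw, min_eq_left hN]
    have htendsto := integral_tendsto_of_tendsto_of_monotone hSint hFint h_mono h_tend
    refine le_of_tendsto htendsto (Filter.Eventually.of_forall fun N => ?_)
    -- per-term bound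
    have hterm : ∀ q, 1 ≤ q → ∫ w in s, a q * g q w ∂μ ≤ b q * (μ s).toReal := by
      intro q hq1
      rw [integral_const_mul]
      by_cases hQq : Q ≤ q
      · have hgint := hg_int q hQq
        have hcond' := hcond q hq1
        have h5 : ∫ w in s, g q w ∂μ ≤ (C₀ * Real.exp (-(q : ℝ) * ϑ₀)) * (μ s).toReal := by
          rw [← setIntegral_condExp hle hgint hs]
          calc ∫ w in s, (μ[g q | 𝓕]) w ∂μ
              ≤ ∫ _ in s, C₀ * Real.exp (-(q : ℝ) * ϑ₀) ∂μ := by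
                refine integral_mono_ae integrable_condExp.restrict (integrable_const _)
                  (ae_restrict_of_ae ?_)
                exact hcond'
            _ = (C₀ * Real.exp (-(q : ℝ) * ϑ₀)) * (μ s).toReal := by
                simp only [setIntegral_const, smul_eq_mul, measureReal_def]; ring
        have h6 : 0 ≤ (C₀ * Real.exp (-(q : ℝ) * ϑ₀)) * (μ s).toReal := by positivity
        have h7 : Real.exp (θ * q) * ((C₀ * Real.exp (-(q : ℝ) * ϑ₀)) * (μ s).toReal)
            = b q * (μ s).toReal := by
          rw [hb]; dsimp only; rw [if_pos hQq]
          have hrq : r ^ q = Real.exp (-θ * q) := by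
            rw [hr, ← Real.exp_nat_mul]; congr 1; ring
          have hxy : Real.exp (θ * q) * Real.exp (-(q : ℝ) * ϑ₀) = Real.exp (-θ * q) := by
            rw [← Real.exp_add]; congr 1; rw [hθ]; ring
          have hmain : Real.exp (θ * q) * (C₀ * Real.exp (-(q : ℝ) * ϑ₀)) = C₀ * r ^ q := by
            calc Real.exp (θ * q) * (C₀ * Real.exp (-(q : ℝ) * ϑ₀))
                = C₀ * (Real.exp (θ * q) * Real.exp (-(q : ℝ) * ϑ₀)) := by ring
              _ = C₀ * Real.exp (-θ * q) := by rw [hxy]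
              _ = C₀ * r ^ q := by rw [hrq]
          rw [← mul_assoc, hmain]
        calc a q * ∫ w in s, g q w ∂μ
            ≤ a q * ((C₀ * Real.exp (-(q : ℝ) * ϑ₀)) * (μ s).toReal) := by
              refine mul_le_mul_of_nonneg_left h5 (ha_nonneg q)
          _ ≤ Real.exp (θ * q) * ((C₀ * Real.exp (-(q : ℝ) * ϑ₀)) * (μ s).toReal) :=
              mul_le_mul_of_nonneg_right (ha_le q hQq) h6
          _ = b q * (μ s).toReal := h7
      · have hz : a q = 0 := ha_zero q (by omega)
        have hbz : b q = 0 := by rw [hb]; dsimp only; rw [if_neg hQq]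
        rw [hz, hbz, zero_mul, zero_mul]
    have hsplit : ∫ w in s, S N w ∂μ
        = (μ s).toReal + ∑ q ∈ Finset.Icc 1 N, ∫ w in s, a q * g q w ∂μ := by
      rw [hS]; dsimp only
      rw [integral_add (integrable_const 1) (integrable_finset_sum _ fun q _ => hq_int q),
        integral_finset_sum _ fun q _ => hq_int q]
      congr 1
      simp [setIntegral_const, measureReal_def]
    rw [hsplit]
    have hsum_le : ∑ q ∈ Finset.Icc 1 N, ∫ w in s, a q * g q w ∂μ
        ≤ (C₀ * r ^ Q / (1 - r)) * (μ s).toReal := by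
      calc ∑ q ∈ Finset.Icc 1 N, ∫ w in s, a q * g q w ∂μ
          ≤ ∑ q ∈ Finset.Icc 1 N, b q * (μ s).toReal := by
            refine Finset.sum_le_sum fun q hq => hterm q ?_
            simp only [Finset.mem_Icc] at hq; omega
        _ = (∑ q ∈ Finset.Icc 1 N, b q) * (μ s).toReal := by rw [Finset.sum_mul]
        _ ≤ (C₀ * r ^ Q / (1 - r)) * (μ s).toReal :=
            mul_le_mul_of_nonneg_right (hb_sum_le N) ENNReal.toReal_nonneg
    rw [hc]
    nlinarith [ENNReal.toReal_nonneg (a := μ s)]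
  -- conclude via set-integral characterization over the trimmed measure
  have hG : StronglyMeasurable[𝓕] (μ[F | 𝓕]) := stronglyMeasurable_condExp
  have hfinal : ∀ᵐ w ∂(μ.trim hle), (μ[F | 𝓕]) w ≤ c := by
    have hsm2 : StronglyMeasurable[𝓕] (fun w => c - (μ[F | 𝓕]) w) :=
      stronglyMeasurable_const.sub hG
    have h0 : 0 ≤ᵐ[μ.trim hle] fun w => c - (μ[F | 𝓕]) w := by
      refine ae_nonneg_of_forall_setIntegral_nonneg ?_ ?_
      · exact ((integrable_const c).sub integrable_condExp).trim hle hsm2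
      · intro s hs _
        show (0:ℝ) ≤ ∫ x in s, (c - (μ[F | 𝓕]) x) ∂(μ.trim hle)
        rw [← setIntegral_trim (μ := μ) hle hsm2 hs]
        have hsub : ∫ x in s, (c - (μ[F | 𝓕]) x) ∂μ
            = (μ s).toReal * c - ∫ x in s, F x ∂μ := by
          rw [integral_sub (integrable_const c).restrict integrable_condExp.restrict,
            setIntegral_condExp hle hint hs]
          congr 1
          simp only [setIntegral_const, smul_eq_mul, measureReal_def]
        have h9 := hkey s hs
        calc (0:ℝ) ≤ (μ s).toReal * c - ∫ x in s, F x ∂μ := by linarith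
          _ = ∫ x in s, (c - (μ[F | 𝓕]) x) ∂μ := hsub.symm
    filter_upwards [h0] with w hw
    simpa using hw
  exact ae_le_of_ae_le_trim hfinal
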